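/- For all integers j and m, F_{m+2}·G_{j+3} + F_{m−3}·G_{j−2} = 5·G_{j+m}. -/

import Mathlib

theorem howard_special (F : ℤ → ℤ) (hF0 : F 0 = 0) (hF1 : F 1 = 1)
    (hF : ∀ k : ℤ, F (k + 2) = F (k + 1) + F k)
    (G : ℤ → ℤ) (hG : ∀ k : ℤ, G (k + 2) = G (k + 1) + G k) (j m : ℤ) :
    F (m + 2) * G (j + 3) + F (m - 3) * G (j - 2) = 5 * G (j + m) := by
  have hF' : ∀ k : ℤ, F (k + 1) = F k + F (k - 1) := by
    intro k
    have := hF (k - 1)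
    rw [show k - 1 + 2 = k + 1 by ring, show k - 1 + 1 = k by ring] at this
    linarith
  have hG' : ∀ k : ℤ, G (k + 1) = G k + G (k - 1) := by
    intro k
    have := hG (k - 1)
    rw [show k - 1 + 2 = k + 1 by ring, show k - 1 + 1 = k by ring] at this
    linarith
  have key : ∀ m : ℤ, ∀ j : ℤ, G (j + m) = F m * G (j + 1) + F (m - 1) * G j := by
    intro m
    induction m using Int.induction_on with
    | zero =>
      intro j
      have hFm1 : F (-1) = 1 := by
        have := hF' 0
        rw [show (0:ℤ) - 1 = -1 by ring] at this
        simp [hF0, hF1] at this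
        linarith
      rw [add_zero, hF0, show (0:ℤ) - 1 = -1 by ring, hFm1]
      ring
    | succ k ih =>
      intro j
      have h1 := ih (j + 1)
      rw [show j + 1 + 1 = j + 2 by ring] at h1
      have h2 := hG j
      have h3 := hF' ↑k
      rw [show j + (↑k + 1) = j + 1 + ↑k by ring,
        show (↑k : ℤ) + 1 - 1 = ↑k by ring]
      linear_combination h1 + F ↑k * h2 - G (j + 1) * h3
    | pred k ih =>
      intro j
      have h1 := ih (j - 1)
      rw [show j - 1 + 1 = j by ring] at h1
      have h2 := hG' j
      rw [show j + (-↑k - 1) = j - 1 + -↑k by ring,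
        show (-↑k : ℤ) - 1 - 1 = -↑k - 2 by ring]
      have h4 := hF' (-↑k - 1)
      rw [show (-↑k : ℤ) - 1 + 1 = -↑k by ring,
        show (-↑k : ℤ) - 1 - 1 = -↑k - 2 by ring] at h4
      linear_combination h1 - F (-↑k - 1) * h2 + G j * h4
  have k1 := key m j
  -- F (m+2) = 2 F m + F (m-1)
  have e1 : F (m + 2) = 2 * F m + F (m - 1) := by
    have a := hF m
    have b := hF' m
    linarith
  have e2 : F (m - 3) = 2 * F (m - 1) - F m := by
    have a := hF' m
    have b := hF' (m - 1)
    rw [show m - 1 + 1 = m by ring, show m - 1 - 1 = m - 2 by ring] at b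
    have c := hF' (m - 2)
    rw [show m - 2 + 1 = m - 1 by ring, show m - 2 - 1 = m - 3 by ring] at c
    linarith
  have g1 : G (j + 3) = 2 * G (j + 1) + G j := by
    have a := hG j
    have b := hG (j + 1)
    rw [show j + 1 + 2 = j + 3 by ring, show j + 1 + 1 = j + 2 by ring] at b
    linarith
  have g2 : G (j - 2) = 2 * G j - G (j + 1) := by
    have a := hG' j
    have b := hG' (j - 1)
    rw [show j - 1 + 1 = j by ring, show j - 1 - 1 = j - 2 by ring] at b
    linarith
  rw [e1, e2, g1, g2, k1]
  ring
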